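/- The polynomials {Q_ε : ε ∈ E} form a ℚ(v)-basis of the space P(k,n) of polynomials in x_1,…,x_n over ℚ(v) that are homogeneous of total degree n−k and of degree at most 1 in each variable x_i. -/

import Mathlib

open scoped Classical

set_option maxHeartbeats 1000000
set_option synthInstance.maxHeartbeats 1000000

noncomputable section

/-- The field ℚ(v) of rational functions. -/
abbrev F : Type := RatFunc ℚ

/-- The variable v. -/
def v : F := RatFunc.X

/-- The quantum integer [r] = (v^r - v^{-r})/(v - v^{-1}). -/
def qint (r : ℕ) : F := (v ^ r - v⁻¹ ^ r) / (v - v⁻¹)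

/-- Sequences of n signs (`true` = `+`) with exactly k pluses. -/
abbrev Stt (n k : ℕ) := {ε : Fin n → Bool // (Finset.univ.filter fun t => ε t = true).card = k}

/-- The adjacent transposition s_m ∈ S_n (1-based: swaps positions m and m+1). -/
def sperm (n m : ℕ) : Equiv.Perm (Fin n) :=
  if h : 1 ≤ m ∧ m < n then Equiv.swap ⟨m - 1, by omega⟩ ⟨m, h.2⟩ else 1

/-- Action of w ∈ S_n on sequences: (w·ε)_{w(t)} = ε_t. -/
def actE {n : ℕ} (w : Equiv.Perm (Fin n)) (ε : Fin n → Bool) : Fin n → Bool :=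
  fun u => ε (w⁻¹ u)

lemma card_actE {n k : ℕ} (w : Equiv.Perm (Fin n)) (ε : Fin n → Bool)
    (h : (Finset.univ.filter fun t => ε t = true).card = k) :
    (Finset.univ.filter fun t => actE w ε t = true).card = k := by
  rw [← h]
  apply Finset.card_bij (fun t _ => w⁻¹ t)
  · intro a ha
    simp only [Finset.mem_filter, Finset.mem_univ, true_and, actE] at ha ⊢
    first | exact (Finset.mem_filter.mp ha).2 | exact ha.2 | exact ha
  · intro a _ b _ hab
    exact (Equiv.injective _) hab
  · intro b hb
    simp only [Finset.mem_filter, Finset.mem_univ, true_and, actE] at hb ⊢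
    exact ⟨w b, by first | exact Finset.mem_filter.mpr ⟨Finset.mem_univ _, by simpa using hb⟩ | simpa using hb, by simp⟩

/-- Action of S_n on the set E of sequences with k pluses. -/
def actS {n k : ℕ} (w : Equiv.Perm (Fin n)) (ε : Stt n k) : Stt n k :=
  ⟨actE w ε.1, card_actE w ε.1 ε.2⟩

/-- The module M, free over ℚ(v) with basis E. -/
abbrev M (n k : ℕ) := Stt n k → F

/-- The basis vector of M corresponding to ε ∈ E. -/
def bv {n k : ℕ} (ε : Stt n k) : M n k := Pi.single ε 1

/-- The sequence 𝟏 = (+,…,+,−,…,−) (k pluses then n−k minuses). -/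
def oneSeq (n k : ℕ) : Fin n → Bool := fun t => decide ((t : ℕ) < k)

lemma card_oneSeq (n k : ℕ) (h : k ≤ n) :
    (Finset.univ.filter fun t => oneSeq n k t = true).card = k := by
  have : (Finset.univ.filter fun t => oneSeq n k t = true)
      = Finset.univ.map (Fin.castLEEmb h) := by
    ext t
    simp only [Finset.mem_filter, Finset.mem_univ, true_and, oneSeq, decide_eq_true_eq,
      Finset.mem_map]
    constructor
    · intro ht; exact ⟨⟨t, ht⟩, rfl⟩
    · rintro ⟨s, rfl⟩; exact s.2
  rw [this, Finset.card_map, Finset.card_univ, Fintype.card_fin]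

/-- 𝟏 as an element of E. -/
def oneS (n k : ℕ) (h : k ≤ n) : Stt n k := ⟨oneSeq n k, card_oneSeq n k h⟩

/-- The operator T_m on M (1 ≤ m ≤ n−1), defined on basis elements. -/
def Thk (n k : ℕ) (m : ℕ) : M n k →ₗ[F] M n k :=
  (Pi.basisFun F (Stt n k)).constr ℕ fun ε =>
    if h : 1 ≤ m ∧ m < n then
      let a := ε.1 ⟨m - 1, by omega⟩
      let b := ε.1 ⟨m, h.2⟩
      if a = true ∧ b = false then bv (actS (sperm n m) ε)
      else if a = b then (-v⁻¹) • bv ε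
      else bv (actS (sperm n m) ε) + (v - v⁻¹) • bv ε
    else 0

/-- A Young diagram inside the k×(n−k) rectangle, given by its row lengths
(1-based: row i has lam i boxes). -/
def IsYoung (n k : ℕ) (lam : ℕ → ℕ) : Prop :=
  (∀ i, 1 ≤ i → lam (i + 1) ≤ lam i) ∧ lam 1 ≤ n - k ∧ (∀ i, k < i → lam i = 0)

/-- The boxes of λ, listed row by row from the bottom row to the top row,
each row from its last box to its first (so box (1,1) comes last). -/
def boxList (k : ℕ) (lam : ℕ → ℕ) : List (ℕ × ℕ) :=
  ((List.range k).reverse.map fun i' =>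
    (List.range (lam (i' + 1))).reverse.map fun j' => (i' + 1, j' + 1)).flatten

/-- The word of w_λ: letter k+j−i for box (i,j). -/
def wword (k : ℕ) (lam : ℕ → ℕ) : List ℕ := (boxList k lam).map fun b => k + b.2 - b.1

/-- The permutation w_λ = ∏_{(i,j)∈λ} s_{k+j−i} (box (1,1) rightmost). -/
def wperm (n k : ℕ) (lam : ℕ → ℕ) : Equiv.Perm (Fin n) := ((wword k lam).map (sperm n)).prod

/-- w_λ·𝟏 as an element of E. -/
def wSt (n k : ℕ) (h : k ≤ n) (lam : ℕ → ℕ) : Stt n k := actS (wperm n k lam) (oneS n k h)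

/-- r is the system of shifts of λ: r_{ij} = max(r_{i,j+1}, r_{i+1,j}) + 1 on boxes of λ,
and r_{ij} = 0 off λ. -/
def IsShifts (lam : ℕ → ℕ) (r : ℕ → ℕ → ℕ) : Prop :=
  ∀ i j, r i j = if 1 ≤ i ∧ 1 ≤ j ∧ j ≤ lam i then max (r i (j + 1)) (r (i + 1) j) + 1 else 0

/-- The operator X_λ = ∏_{(i,j)∈λ} (T_{k+j−i} − v^{r_{ij}}/[r_{ij}]), the factor of
box (1,1) applied first. -/
def Xop (n k : ℕ) (lam : ℕ → ℕ) (r : ℕ → ℕ → ℕ) : Module.End F (M n k) :=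
  ((boxList k lam).map fun b =>
    (Thk n k (k + b.2 - b.1) - (v ^ r b.1 b.2 / qint (r b.1 b.2)) • (1 : Module.End F (M n k)) : Module.End F (M n k))).prod

/-- O(v^m): rational functions with a zero of order ≥ m at v = 0. -/
def Ozero (m : ℕ) : Set F :=
  {f | ∃ p q : Polynomial ℚ, Polynomial.eval 0 q ≠ 0 ∧
        f = v ^ m * (algebraMap (Polynomial ℚ) F p / algebraMap (Polynomial ℚ) F q)}

/-- Value of a sequence at the 1-based position t. -/
def posVal {n : ℕ} (ε : Fin n → Bool) (t : ℕ) : Bool :=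
  if h : 1 ≤ t ∧ t ≤ n then ε ⟨t - 1, by omega⟩ else false

/-- a(i) = k + λ_i − i + 1 for 1 ≤ i ≤ k, and a(i) = 0 for i > k. -/
def aF (k : ℕ) (lam : ℕ → ℕ) (i : ℕ) : ℕ := if i ≤ k then k + lam i + 1 - i else 0

/-- The contribution r_t(ε) to the weight. -/
def weightT (k : ℕ) (lam : ℕ → ℕ) (r : ℕ → ℕ → ℕ) {n : ℕ} (ε : Fin n → Bool) (t : ℕ) : ℕ :=
  ∑ i ∈ Finset.Icc 1 k,
    ((if posVal ε t = false ∧ 1 ≤ lam i ∧ t = aF k lam i then r i (lam i) - 1 else 0) +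
     (if posVal ε t = true ∧ aF k lam (i + 1) < t ∧ t < aF k lam i then r i (t + i - k) else 0))

/-- The weight r_λ(ε) = Σ_{t=1}^n r_t(ε). -/
def weight (n k : ℕ) (lam : ℕ → ℕ) (r : ℕ → ℕ → ℕ) (ε : Fin n → Bool) : ℕ :=
  ∑ t ∈ Finset.Icc 1 n, weightT k lam r ε t

/-- 𝓛_λ = Σ_ε O(v^{r_λ(ε)}) ε. -/
def Lset (n k : ℕ) (lam : ℕ → ℕ) (r : ℕ → ℕ → ℕ) : Set (M n k) :=
  {m | ∀ ε : Stt n k, m ε ∈ Ozero (weight n k lam r ε.1)}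

/-- The length (number of inversions) of a permutation. -/
def len {n : ℕ} (w : Equiv.Perm (Fin n)) : ℕ :=
  (Finset.univ.filter fun p : Fin n × Fin n => p.1 < p.2 ∧ w p.2 < w p.1).card

/-- The parabolic subgroup W_J = S_k × S_{n−k}: permutations mapping {1,…,k} to itself. -/
def WJ (n k : ℕ) : Set (Equiv.Perm (Fin n)) :=
  {σ | ∀ t : Fin n, (t : ℕ) < k → ((σ t : ℕ) < k)}

/-- W^J: permutations of minimal length in their coset w·W_J. -/
def Wmin (n k : ℕ) : Set (Equiv.Perm (Fin n)) :=
  {w | ∀ σ ∈ WJ n k, len w ≤ len (w * σ)}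

/-- The variable x_p (1-based position p) in ℚ(v)[x_1,…,x_n]. -/
def xv (n p : ℕ) : MvPolynomial (Fin n) F :=
  if h : 1 ≤ p ∧ p ≤ n then MvPolynomial.X ⟨p - 1, by omega⟩ else 0

/-- Exchange of the variables x_i and x_{i+1} (1-based, 1 ≤ i ≤ n−1). -/
def swapf (n i : ℕ) (f : MvPolynomial (Fin n) F) : MvPolynomial (Fin n) F :=
  if h : 1 ≤ i ∧ i < n then
    MvPolynomial.rename (Equiv.swap ⟨i - 1, by omega⟩ ⟨i, h.2⟩) f
  else f

/-- The divided difference ∂_i f = (f − s_i f)/(x_i − x_{i+1}). -/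
def ddiff (n i : ℕ) (f : MvPolynomial (Fin n) F) : MvPolynomial (Fin n) F :=
  if h : ∃ g, f - swapf n i f = (xv n i - xv n (i + 1)) * g then h.choose else 0

/-- The operator ∇_i f = (v x_{i+1} − v⁻¹ x_i)·∂_i f. -/
def nabla (n i : ℕ) (f : MvPolynomial (Fin n) F) : MvPolynomial (Fin n) F :=
  (MvPolynomial.C v * xv n (i + 1) - MvPolynomial.C v⁻¹ * xv n i) * ddiff n i f

/-- Parenthesis matching: minuses (`false`) are openers, pluses (`true`) are closers;
each plus is matched with the most recent unmatched minus, i.e. each minus with the first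
subsequent unmatched plus.  Returns the list of matched pairs (p,q) of 1-based positions
and the list of unmatched minus positions. -/
def matchAux : List Bool → ℕ → List ℕ → List (ℕ × ℕ) × List ℕ
  | [], _, stack => ([], stack)
  | b :: rest, pos, stack =>
    if b then
      match stack with
      | [] => matchAux rest (pos + 1) []
      | p :: stack' =>
        let res := matchAux rest (pos + 1) stack'
        ((p, pos) :: res.1, res.2)
    else matchAux rest (pos + 1) (pos :: stack)

/-- d(ε) = #{(p,q) : p < q, ε_p = −, ε_q = +}. -/
def dstat {n : ℕ} (ε : Fin n → Bool) : ℕ :=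
  (Finset.univ.filter fun pq : Fin n × Fin n =>
    pq.1 < pq.2 ∧ ε pq.1 = false ∧ ε pq.2 = true).card

/-- The polynomial Q_ε. -/
def Qpoly (n : ℕ) (ε : Fin n → Bool) : MvPolynomial (Fin n) F :=
  MvPolynomial.C (v⁻¹ ^ dstat ε) *
    ((matchAux (List.ofFn ε) 1 []).1.map fun pq =>
        xv n pq.1 - MvPolynomial.C (v ^ (pq.2 + 1 - pq.1)) * xv n pq.2).prod *
    ((matchAux (List.ofFn ε) 1 []).2.map fun p => xv n p).prod

/-- The operator T_m on M′ (the parabolic module induced from T_j ↦ v). -/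
def Thk' (n k : ℕ) (m : ℕ) : M n k →ₗ[F] M n k :=
  (Pi.basisFun F (Stt n k)).constr ℕ fun ε =>
    if h : 1 ≤ m ∧ m < n then
      let a := ε.1 ⟨m - 1, by omega⟩
      let b := ε.1 ⟨m, h.2⟩
      if a = true ∧ b = false then bv (actS (sperm n m) ε)
      else if a = b then v • bv ε
      else bv (actS (sperm n m) ε) + (v - v⁻¹) • bv ε
    else 0

/-- The map Φ : M′ → ℚ(v)[x_1,…,x_n], ε ↦ v^{−d(ε)} ∏_{t : ε_t = −} x_t. -/
def Phi (n k : ℕ) : M n k →ₗ[F] MvPolynomial (Fin n) F :=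
  (Pi.basisFun F (Stt n k)).constr ℕ fun ε =>
    MvPolynomial.C (v⁻¹ ^ dstat ε.1) *
      ∏ t ∈ Finset.univ.filter (fun t => ε.1 t = false), MvPolynomial.X t

/-- The space P(k,n): polynomials homogeneous of total degree n−k, of degree ≤ 1 in each
variable. -/
def Pspace (n k : ℕ) : Set (MvPolynomial (Fin n) F) :=
  {f | f.IsHomogeneous (n - k) ∧ ∀ t : Fin n, f.degreeOf t ≤ 1}


/-- Positions (from `pos`) of `false` entries. -/
def falsePos : List Bool → ℕ → List ℕ
  | [], _ => []
  | b :: r, pos => if b then falsePos r (pos + 1) else pos :: falsePos r (pos + 1)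

/-- Positions (from `pos`) of `true` entries. -/
def truePos : List Bool → ℕ → List ℕ
  | [], _ => []
  | b :: r, pos => if b then pos :: truePos r (pos + 1) else truePos r (pos + 1)

lemma mem_falsePos : ∀ (l : List Bool) (pos p : ℕ),
    p ∈ falsePos l pos ↔ ∃ i, ∃ h : i < l.length, p = pos + i ∧ l.get ⟨i, h⟩ = false := by
  intro l
  induction l with
  | nil => simp [falsePos]
  | cons b r ih =>
    intro pos p
    cases b with
    | true =>
      simp only [falsePos, if_true, ih]
      constructor
      · rintro ⟨i, h, rfl, hv⟩
        exact ⟨i + 1, by simpa using h, by omega, by simpa using hv⟩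
      · rintro ⟨i, h, rfl, hv⟩
        match i with
        | 0 => simp at hv
        | (j+1) =>
          exact ⟨j, by simpa using h, by omega, by simpa using hv⟩
    | false =>
      simp only [falsePos, Bool.false_eq_true, if_false, List.mem_cons, ih]
      constructor
      · rintro (rfl | ⟨i, h, rfl, hv⟩)
        · exact ⟨0, by simp, by omega, by simp⟩
        · exact ⟨i + 1, by simpa using h, by omega, by simpa using hv⟩
      · rintro ⟨i, h, rfl, hv⟩
        match i with
        | 0 => left; omega
        | (j+1) => right; exact ⟨j, by simpa using h, by omega, by simpa using hv⟩

lemma mem_truePos : ∀ (l : List Bool) (pos p : ℕ),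
    p ∈ truePos l pos ↔ ∃ i, ∃ h : i < l.length, p = pos + i ∧ l.get ⟨i, h⟩ = true := by
  intro l
  induction l with
  | nil => simp [truePos]
  | cons b r ih =>
    intro pos p
    cases b with
    | true =>
      simp only [truePos, if_true, List.mem_cons, ih]
      constructor
      · rintro (rfl | ⟨i, h, rfl, hv⟩)
        · exact ⟨0, by simp, by omega, by simp⟩
        · exact ⟨i + 1, by simpa using h, by omega, by simpa using hv⟩
      · rintro ⟨i, h, rfl, hv⟩
        match i with
        | 0 => left; omega
        | (j+1) => right; exact ⟨j, by simpa using h, by omega, by simpa using hv⟩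
    | false =>
      simp only [truePos, Bool.false_eq_true, if_false, ih]
      constructor
      · rintro ⟨i, h, rfl, hv⟩
        exact ⟨i + 1, by simpa using h, by omega, by simpa using hv⟩
      · rintro ⟨i, h, rfl, hv⟩
        match i with
        | 0 => simp at hv
        | (j+1) => exact ⟨j, by simpa using h, by omega, by simpa using hv⟩

lemma falsePos_sorted : ∀ (l : List Bool) (pos : ℕ), (falsePos l pos).Pairwise (· < ·) := by
  intro l
  induction l with
  | nil => intro pos; simp [falsePos]
  | cons b r ih =>
    intro pos
    cases b with
    | true => simpa [falsePos] using ih (pos + 1)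
    | false =>
      simp only [falsePos, Bool.false_eq_true, if_false, List.pairwise_cons]
      refine ⟨fun p hp => ?_, ih (pos + 1)⟩
      rw [mem_falsePos] at hp
      obtain ⟨i, h, rfl, -⟩ := hp
      omega

lemma matchAux_perm : ∀ (l : List Bool) (pos : ℕ) (stack : List ℕ),
    ((matchAux l pos stack).1.map Prod.fst ++ (matchAux l pos stack).2).Perm
      (stack ++ falsePos l pos) := by
  intro l
  induction l with
  | nil => intro pos stack; simp [matchAux, falsePos]
  | cons b r ih =>
    intro pos stack
    cases b with
    | true =>
      match stack with
      | [] => simpa [matchAux, falsePos] using ih (pos + 1) []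
      | p :: stack' =>
        simp only [matchAux, if_true, falsePos, List.map_cons, List.cons_append]
        simpa using (ih (pos + 1) stack').cons p
    | false =>
      simp only [matchAux, Bool.false_eq_true, if_false, falsePos]
      refine ((ih (pos + 1) (pos :: stack)).trans ?_)
      exact List.perm_middle.symm

lemma matchAux_pairs : ∀ (l : List Bool) (pos : ℕ) (stack : List ℕ)
    (_ : ∀ p ∈ stack, p < pos), ∀ pq ∈ (matchAux l pos stack).1,
    pq.1 < pq.2 ∧ pq.2 ∈ truePos l pos ∧ (pq.1 ∈ stack ∨ pq.1 ∈ falsePos l pos) := by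
  intro l
  induction l with
  | nil => intro pos stack _ pq hpq; simp [matchAux] at hpq
  | cons b r ih =>
    intro pos stack hs pq hpq
    cases b with
    | true =>
      match stack with
      | [] =>
        simp only [matchAux, if_true] at hpq
        obtain ⟨h1, h2, h3⟩ := ih (pos + 1) [] (by simp) pq hpq
        refine ⟨h1, ?_, ?_⟩
        · simp only [truePos, if_true, List.mem_cons]; right; exact h2
        · rcases h3 with h | h
          · simp at h
          · right; simpa [falsePos] using h
      | p :: stack' =>
        simp only [matchAux, if_true, List.mem_cons] at hpq
        rcases hpq with rfl | hpq
        · refine ⟨hs p (by simp), by simp [truePos], Or.inl (by simp)⟩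
        · obtain ⟨h1, h2, h3⟩ := ih (pos + 1) stack' (fun q hq => by
            have := hs q (by simp [hq]); omega) pq hpq
          refine ⟨h1, ?_, ?_⟩
          · simp only [truePos, if_true, List.mem_cons]; right; exact h2
          · rcases h3 with h | h
            · left; simp [h]
            · right; simpa [falsePos] using h
    | false =>
      simp only [matchAux, Bool.false_eq_true, if_false] at hpq
      obtain ⟨h1, h2, h3⟩ := ih (pos + 1) (pos :: stack) (fun q hq => by
        rcases List.mem_cons.mp hq with rfl | hq
        · omega
        · have := hs q hq; omega) pq hpq
      refine ⟨h1, by simpa [truePos] using h2, ?_⟩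
      rcases h3 with h | h
      · rcases List.mem_cons.mp h with rfl | h
        · right; simp [falsePos]
        · left; exact h
      · right
        simp only [falsePos, Bool.false_eq_true, if_false, List.mem_cons]
        right; exact h

lemma matchAux_snd_ge : ∀ (l : List Bool) (pos : ℕ) (stack : List ℕ),
    ∀ pq ∈ (matchAux l pos stack).1, pos ≤ pq.2 := by
  intro l
  induction l with
  | nil => intro pos stack pq hpq; simp [matchAux] at hpq
  | cons b r ih =>
    intro pos stack pq hpq
    cases b with
    | true =>
      match stack with
      | [] =>
        simp only [matchAux, if_true] at hpq
        have := ih (pos + 1) [] pq hpq; omega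
      | p :: stack' =>
        simp only [matchAux, if_true, List.mem_cons] at hpq
        rcases hpq with rfl | hpq
        · simp
        · have := ih (pos + 1) stack' pq hpq; omega
    | false =>
      simp only [matchAux, Bool.false_eq_true, if_false] at hpq
      have := ih (pos + 1) (pos :: stack) pq hpq; omega

lemma matchAux_snd_sorted : ∀ (l : List Bool) (pos : ℕ) (stack : List ℕ),
    ((matchAux l pos stack).1.map Prod.snd).Pairwise (· < ·) := by
  intro l
  induction l with
  | nil => intro pos stack; simp [matchAux]
  | cons b r ih =>
    intro pos stack
    cases b with
    | true =>
      match stack with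
      | [] => simpa [matchAux] using ih (pos + 1) []
      | p :: stack' =>
        simp only [matchAux, if_true, List.map_cons, List.pairwise_cons]
        refine ⟨?_, ih (pos + 1) stack'⟩
        intro q hq
        simp only [List.mem_map] at hq
        obtain ⟨pq, hpq, rfl⟩ := hq
        have := matchAux_snd_ge r (pos + 1) stack' pq hpq; omega
    | false =>
      simpa [matchAux] using ih (pos + 1) (pos :: stack)

/-- Conversion from 1-based positions to `Fin n`. -/
def pfi {n : ℕ} (hn : 0 < n) (p : ℕ) : Fin n := ⟨(p - 1) % n, Nat.mod_lt _ hn⟩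

lemma pfi_val {n : ℕ} (hn : 0 < n) {p : ℕ} (h1 : 1 ≤ p) (h2 : p ≤ n) :
    ((pfi hn p : Fin n) : ℕ) = p - 1 := Nat.mod_eq_of_lt (by omega)

lemma pfi_inj {n : ℕ} (hn : 0 < n) {p q : ℕ} (hp1 : 1 ≤ p) (hp2 : p ≤ n)
    (hq1 : 1 ≤ q) (hq2 : q ≤ n) (h : pfi hn p = pfi hn q) : p = q := by
  have := congrArg Fin.val h
  rw [pfi_val hn hp1 hp2, pfi_val hn hq1 hq2] at this
  omega

lemma xv_eq {n : ℕ} (hn : 0 < n) {p : ℕ} (h1 : 1 ≤ p) (h2 : p ≤ n) :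
    xv n p = MvPolynomial.X (pfi hn p) := by
  rw [xv, dif_pos ⟨h1, h2⟩]
  congr 1
  apply Fin.ext
  rw [pfi_val hn h1 h2]

lemma pfi_succ {n : ℕ} (hn : 0 < n) (t : Fin n) : pfi hn ((t : ℕ) + 1) = t := by
  apply Fin.ext
  rw [pfi_val hn (by omega) (by omega)]
  omega

lemma mem_falsePos_ofFn {n : ℕ} (hn : 0 < n) (ε : Fin n → Bool) (p : ℕ) :
    p ∈ falsePos (List.ofFn ε) 1 ↔ ∃ t : Fin n, ε t = false ∧ p = (t : ℕ) + 1 := by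
  rw [mem_falsePos]
  constructor
  · rintro ⟨i, h, rfl, hv⟩
    rw [List.length_ofFn] at h
    refine ⟨⟨i, h⟩, ?_, by simp [Nat.add_comm]⟩
    rw [List.get_ofFn] at hv
    simpa using hv
  · rintro ⟨t, ht, rfl⟩
    refine ⟨(t : ℕ), by simpa using t.2, by omega, ?_⟩
    rw [List.get_ofFn]
    simpa using ht

lemma mem_truePos_ofFn {n : ℕ} (hn : 0 < n) (ε : Fin n → Bool) (p : ℕ) :
    p ∈ truePos (List.ofFn ε) 1 ↔ ∃ t : Fin n, ε t = true ∧ p = (t : ℕ) + 1 := by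
  rw [mem_truePos]
  constructor
  · rintro ⟨i, h, rfl, hv⟩
    rw [List.length_ofFn] at h
    refine ⟨⟨i, h⟩, ?_, by simp [Nat.add_comm]⟩
    rw [List.get_ofFn] at hv
    simpa using hv
  · rintro ⟨t, ht, rfl⟩
    refine ⟨(t : ℕ), by simpa using t.2, by omega, ?_⟩
    rw [List.get_ofFn]
    simpa using ht

/-- The list of matched pairs of ε. -/
def MPl (n : ℕ) (ε : Fin n → Bool) : List (ℕ × ℕ) := (matchAux (List.ofFn ε) 1 []).1

/-- The list of unmatched minus positions of ε. -/
def MUl (n : ℕ) (ε : Fin n → Bool) : List ℕ := (matchAux (List.ofFn ε) 1 []).2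

/-- The set of minus positions of ε. -/
def Mi {n : ℕ} (ε : Fin n → Bool) : Finset (Fin n) :=
  Finset.univ.filter (fun t => ε t = false)

lemma MP_perm (n : ℕ) (ε : Fin n → Bool) :
    ((MPl n ε).map Prod.fst ++ MUl n ε).Perm (falsePos (List.ofFn ε) 1) := by
  simpa [MPl, MUl] using matchAux_perm (List.ofFn ε) 1 []

lemma fstU_nodup (n : ℕ) (ε : Fin n → Bool) :
    ((MPl n ε).map Prod.fst ++ MUl n ε).Nodup :=
  (MP_perm n ε).nodup_iff.mpr (falsePos_sorted _ _).nodup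

lemma MP_mem {n : ℕ} (hn : 0 < n) {ε : Fin n → Bool} {pq : ℕ × ℕ} (h : pq ∈ MPl n ε) :
    pq.1 < pq.2 ∧ 1 ≤ pq.1 ∧ pq.2 ≤ n ∧
      ε (pfi hn pq.1) = false ∧ ε (pfi hn pq.2) = true := by
  obtain ⟨h1, h2, h3⟩ := matchAux_pairs (List.ofFn ε) 1 [] (by simp) pq h
  rcases h3 with h3 | h3
  · simp at h3
  · rw [mem_truePos_ofFn hn] at h2
    rw [mem_falsePos_ofFn hn] at h3
    obtain ⟨t, ht, hts⟩ := h2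
    obtain ⟨s, hs, hss⟩ := h3
    refine ⟨h1, by omega, by have := t.2; omega, ?_, ?_⟩
    · rw [hss, pfi_succ]; exact hs
    · rw [hts, pfi_succ]; exact ht

lemma MU_mem {n : ℕ} (hn : 0 < n) {ε : Fin n → Bool} {u : ℕ} (h : u ∈ MUl n ε) :
    1 ≤ u ∧ u ≤ n ∧ ε (pfi hn u) = false := by
  have hm : u ∈ falsePos (List.ofFn ε) 1 :=
    (MP_perm n ε).mem_iff.mp (List.mem_append_right _ h)
  rw [mem_falsePos_ofFn hn] at hm
  obtain ⟨t, ht, rfl⟩ := hm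
  refine ⟨by omega, by have := t.2; omega, ?_⟩
  rw [pfi_succ]; exact ht

lemma MP_fst_mem {n : ℕ} (hn : 0 < n) {ε : Fin n → Bool} {pq : ℕ × ℕ} (h : pq ∈ MPl n ε) :
    1 ≤ pq.1 ∧ pq.1 ≤ n ∧ ε (pfi hn pq.1) = false := by
  obtain ⟨h1, h2, h3, h4, h5⟩ := MP_mem hn h
  exact ⟨h2, by omega, h4⟩

lemma MP_nodup (n : ℕ) (ε : Fin n → Bool) : (MPl n ε).Nodup := by
  have := ((List.nodup_append.mp (fstU_nodup n ε)).1)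
  exact this.of_map

lemma MU_nodup (n : ℕ) (ε : Fin n → Bool) : (MUl n ε).Nodup :=
  (List.nodup_append.mp (fstU_nodup n ε)).2.1

lemma MP_fst_nodup (n : ℕ) (ε : Fin n → Bool) : ((MPl n ε).map Prod.fst).Nodup :=
  (List.nodup_append.mp (fstU_nodup n ε)).1

lemma MP_snd_nodup (n : ℕ) (ε : Fin n → Bool) : ((MPl n ε).map Prod.snd).Nodup :=
  (matchAux_snd_sorted (List.ofFn ε) 1 []).nodup

lemma MP_fst_MU_disjoint (n : ℕ) (ε : Fin n → Bool) {pq : ℕ × ℕ} {u : ℕ}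
    (hpq : pq ∈ MPl n ε) (hu : u ∈ MUl n ε) : pq.1 ≠ u := by
  intro h
  have hd := List.disjoint_of_nodup_append (fstU_nodup n ε)
  exact hd (List.mem_map_of_mem (f := Prod.fst) hpq) (h ▸ hu)

lemma Mi_surj {n : ℕ} (hn : 0 < n) {ε : Fin n → Bool} {t : Fin n} (ht : t ∈ Mi ε) :
    ((t : ℕ) + 1) ∈ (MPl n ε).map Prod.fst ∨ ((t : ℕ) + 1) ∈ MUl n ε := by
  rw [Mi, Finset.mem_filter] at ht
  have : ((t : ℕ) + 1) ∈ falsePos (List.ofFn ε) 1 := by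
    rw [mem_falsePos_ofFn hn]
    exact ⟨t, ht.2, rfl⟩
  have := (MP_perm n ε).mem_iff.mpr this
  exact List.mem_append.mp this

lemma length_MP_MU {n : ℕ} (hn : 0 < n) (ε : Fin n → Bool) :
    (MPl n ε).length + (MUl n ε).length = (Mi ε).card := by
  have hlen : ((MPl n ε).map Prod.fst ++ MUl n ε).length
      = (falsePos (List.ofFn ε) 1).length := (MP_perm n ε).length_eq
  rw [List.length_append, List.length_map] at hlen
  rw [hlen]
  have hnd := (falsePos_sorted (List.ofFn ε) 1).nodup
  rw [← List.toFinset_card_of_nodup hnd]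
  have himg : (falsePos (List.ofFn ε) 1).toFinset = (Mi ε).image (fun t : Fin n => (t : ℕ) + 1) := by
    ext p
    simp only [List.mem_toFinset, mem_falsePos_ofFn hn, Finset.mem_image, Mi,
      Finset.mem_filter, Finset.mem_univ, true_and]
    constructor
    · rintro ⟨t, ht, h⟩
      exact ⟨t, ht, by omega⟩
    · rintro ⟨t, ht, h⟩
      exact ⟨t, ht, by omega⟩
  have hinj : Function.Injective (fun t : Fin n => (t : ℕ) + 1) := by
    intro a b h
    simp only [add_left_inj] at h
    exact Fin.val_injective h
  rw [himg, Finset.card_image_of_injective _ hinj]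

/-- The squarefree monomial with variable set S. -/
def mS {n : ℕ} (S : Finset (Fin n)) : MvPolynomial (Fin n) F := ∏ t ∈ S, MvPolynomial.X t

/-- The exponent vector of `mS S`. -/
def eS {n : ℕ} (S : Finset (Fin n)) : Fin n →₀ ℕ := ∑ t ∈ S, Finsupp.single t 1

/-- The weight of a variable set. -/
def Wt {n : ℕ} (S : Finset (Fin n)) : ℕ := ∑ t ∈ S, (t : ℕ)

lemma mS_eq {n : ℕ} (S : Finset (Fin n)) :
    mS S = MvPolynomial.monomial (eS S) (1 : F) := by
  classical
  induction S using Finset.induction_on with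
  | empty => simp [mS, eS]
  | insert a s hx ih =>
    rw [mS, Finset.prod_insert hx, ← mS, ih]
    have he : eS (insert a s) = Finsupp.single a 1 + eS s := by
      rw [eS, Finset.sum_insert hx, ← eS]
    rw [he, MvPolynomial.X, MvPolynomial.monomial_mul, one_mul]

lemma eS_apply {n : ℕ} (S : Finset (Fin n)) (t : Fin n) :
    eS S t = if t ∈ S then 1 else 0 := by
  classical
  rw [eS, Finset.sum_apply']
  simp [Finsupp.single_apply, Finset.sum_ite_eq]

lemma eS_inj {n : ℕ} {S S' : Finset (Fin n)} (h : eS S = eS S') : S = S' := by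
  ext t
  have := DFunLike.congr_fun h t
  simp only [eS_apply] at this
  by_cases h1 : t ∈ S <;> by_cases h2 : t ∈ S' <;> simp_all

lemma eS_degree {n : ℕ} (S : Finset (Fin n)) : (eS S).degree = S.card := by
  classical
  have hsupp : (eS S).support = S := by
    ext t
    rw [Finsupp.mem_support_iff, eS_apply]
    by_cases h : t ∈ S <;> simp [h]
  rw [Finsupp.degree_apply, hsupp]
  rw [Finset.card_eq_sum_ones S]
  apply Finset.sum_congr rfl
  intro t ht
  rw [eS_apply, if_pos ht]

lemma coeff_mS {n : ℕ} (S S' : Finset (Fin n)) :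
    MvPolynomial.coeff (eS S') (mS S) = if S = S' then (1 : F) else 0 := by
  classical
  rw [mS_eq, MvPolynomial.coeff_monomial]
  by_cases h : S = S'
  · subst h; simp
  · rw [if_neg (fun he => h (eS_inj he)), if_neg h]

/-- `Pspace` as a submodule. -/
def Psub (n k : ℕ) : Submodule F (MvPolynomial (Fin n) F) where
  carrier := Pspace n k
  zero_mem' := ⟨MvPolynomial.isHomogeneous_zero _ _ _, fun t => by
    rw [MvPolynomial.degreeOf_zero]; omega⟩
  add_mem' := by
    rintro a b ⟨ha1, ha2⟩ ⟨hb1, hb2⟩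
    exact ⟨ha1.add hb1, fun t =>
      le_trans (MvPolynomial.degreeOf_add_le t a b) (max_le (ha2 t) (hb2 t))⟩
  smul_mem' := by
    rintro c a ⟨ha1, ha2⟩
    refine ⟨(MvPolynomial.homogeneousSubmodule (Fin n) F (n - k)).smul_mem c ha1, fun t => ?_⟩
    rw [MvPolynomial.degreeOf_le_iff]
    intro m hm
    have hma : m ∈ a.support := by
      rw [MvPolynomial.mem_support_iff] at hm ⊢
      intro h0
      apply hm
      rw [MvPolynomial.coeff_smul, h0, smul_zero]
    exact MvPolynomial.degreeOf_le_iff.mp (ha2 t) m hma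

lemma mono_mem_Psub {n k : ℕ} (a : F) {S : Finset (Fin n)} (hS : S.card = n - k) :
    MvPolynomial.C a * mS S ∈ Psub n k := by
  classical
  rw [mS_eq, MvPolynomial.C_mul_monomial, mul_one]
  constructor
  · exact MvPolynomial.isHomogeneous_monomial a (by rw [eS_degree, hS])
  · intro t
    rw [MvPolynomial.degreeOf_le_iff]
    intro m hm
    have := MvPolynomial.support_monomial_subset hm
    rw [Finset.mem_singleton] at this
    subst this
    rw [eS_apply]
    split <;> omega

/-- The variable set of the term of the expansion of `Qpoly` indexed by `T`. -/
def STf {n : ℕ} (hn : 0 < n) (ε : Fin n → Bool) (T : Finset (ℕ × ℕ)) : Finset (Fin n) :=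
  ((T.image fun pq => pfi hn pq.1) ∪
    (((MPl n ε).toFinset \ T).image fun pq => pfi hn pq.2)) ∪
      ((MUl n ε).toFinset.image (pfi hn))

/-- The coefficient of the term of the expansion of `Qpoly` indexed by `T`. -/
def cTf {n : ℕ} (ε : Fin n → Bool) (T : Finset (ℕ × ℕ)) : F :=
  v⁻¹ ^ dstat ε * ∏ pq ∈ (MPl n ε).toFinset \ T, (-(v ^ (pq.2 + 1 - pq.1)))

lemma Qpoly_eq (n : ℕ) (ε : Fin n → Bool) :
    Qpoly n ε = MvPolynomial.C (v⁻¹ ^ dstat ε) *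
      ((MPl n ε).map fun pq =>
        xv n pq.1 - MvPolynomial.C (v ^ (pq.2 + 1 - pq.1)) * xv n pq.2).prod *
      ((MUl n ε).map fun p => xv n p).prod := rfl

lemma fst_injOn {n : ℕ} (hn : 0 < n) (ε : Fin n → Bool) {T : Finset (ℕ × ℕ)}
    (hT : T ⊆ (MPl n ε).toFinset) :
    ∀ pq ∈ T, ∀ pq' ∈ T, pfi hn pq.1 = pfi hn pq'.1 → pq = pq' := by
  intro pq hpq pq' hpq' h
  have h1 := MP_fst_mem hn (List.mem_toFinset.mp (hT hpq))
  have h2 := MP_fst_mem hn (List.mem_toFinset.mp (hT hpq'))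
  have := pfi_inj hn h1.1 h1.2.1 h2.1 h2.2.1 h
  exact List.inj_on_of_nodup_map (MP_fst_nodup n ε)
    (List.mem_toFinset.mp (hT hpq)) (List.mem_toFinset.mp (hT hpq')) this

lemma snd_injOn {n : ℕ} (hn : 0 < n) (ε : Fin n → Bool) {T : Finset (ℕ × ℕ)}
    (hT : T ⊆ (MPl n ε).toFinset) :
    ∀ pq ∈ T, ∀ pq' ∈ T, pfi hn pq.2 = pfi hn pq'.2 → pq = pq' := by
  intro pq hpq pq' hpq' h
  have h1 := MP_mem hn (List.mem_toFinset.mp (hT hpq))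
  have h2 := MP_mem hn (List.mem_toFinset.mp (hT hpq'))
  have := pfi_inj hn (by omega) h1.2.2.1 (by omega) h2.2.2.1 h
  exact List.inj_on_of_nodup_map (MP_snd_nodup n ε)
    (List.mem_toFinset.mp (hT hpq)) (List.mem_toFinset.mp (hT hpq')) this

lemma u_injOn {n : ℕ} (hn : 0 < n) (ε : Fin n → Bool) :
    ∀ u ∈ (MUl n ε).toFinset, ∀ u' ∈ (MUl n ε).toFinset, pfi hn u = pfi hn u' → u = u' := by
  intro u hu u' hu' h
  have h1 := MU_mem hn (List.mem_toFinset.mp hu)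
  have h2 := MU_mem hn (List.mem_toFinset.mp hu')
  exact pfi_inj hn h1.1 h1.2.1 h2.1 h2.2.1 h

lemma STf_disj1 {n : ℕ} (hn : 0 < n) (ε : Fin n → Bool) {T : Finset (ℕ × ℕ)}
    (hT : T ⊆ (MPl n ε).toFinset) :
    Disjoint (T.image fun pq => pfi hn pq.1)
      (((MPl n ε).toFinset \ T).image fun pq => pfi hn pq.2) := by
  rw [Finset.disjoint_left]
  intro t ht1 ht2
  rw [Finset.mem_image] at ht1 ht2
  obtain ⟨pq, hpq, rfl⟩ := ht1
  obtain ⟨pq', hpq', he⟩ := ht2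
  have h1 := MP_mem hn (List.mem_toFinset.mp (hT hpq))
  have h2 := MP_mem hn (List.mem_toFinset.mp (Finset.mem_sdiff.mp hpq').1)
  have h3 := h2.2.2.2.2
  rw [he, h1.2.2.2.1] at h3
  simp at h3

lemma STf_disj2 {n : ℕ} (hn : 0 < n) (ε : Fin n → Bool) {T : Finset (ℕ × ℕ)}
    (hT : T ⊆ (MPl n ε).toFinset) :
    Disjoint ((T.image fun pq => pfi hn pq.1) ∪
        (((MPl n ε).toFinset \ T).image fun pq => pfi hn pq.2))
      ((MUl n ε).toFinset.image (pfi hn)) := by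
  rw [Finset.disjoint_left]
  intro t ht1 ht2
  rw [Finset.mem_image] at ht2
  obtain ⟨u, hu, heu⟩ := ht2
  have hum := MU_mem hn (List.mem_toFinset.mp hu)
  rw [Finset.mem_union] at ht1
  rcases ht1 with ht1 | ht1
  · rw [Finset.mem_image] at ht1
    obtain ⟨pq, hpq, he⟩ := ht1
    have h1 := MP_fst_mem hn (List.mem_toFinset.mp (hT hpq))
    have : pq.1 = u := pfi_inj hn h1.1 h1.2.1 hum.1 hum.2.1 (by rw [he, heu])
    exact MP_fst_MU_disjoint n ε (List.mem_toFinset.mp (hT hpq))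
      (List.mem_toFinset.mp hu) this
  · rw [Finset.mem_image] at ht1
    obtain ⟨pq, hpq, he⟩ := ht1
    have h1 := MP_mem hn (List.mem_toFinset.mp (Finset.mem_sdiff.mp hpq).1)
    have h3 := h1.2.2.2.2
    rw [he, ← heu, hum.2.2] at h3
    simp at h3

lemma Qexpand {n : ℕ} (hn : 0 < n) (ε : Fin n → Bool) :
    Qpoly n ε = ∑ T ∈ (MPl n ε).toFinset.powerset,
      MvPolynomial.C (cTf ε T) * mS (STf hn ε T) := by
  classical
  rw [Qpoly_eq]
  rw [← List.prod_toFinset _ (MP_nodup n ε), ← List.prod_toFinset _ (MU_nodup n ε)]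
  have e1 : ∏ pq ∈ (MPl n ε).toFinset,
      (xv n pq.1 - MvPolynomial.C (v ^ (pq.2 + 1 - pq.1)) * xv n pq.2)
      = ∏ pq ∈ (MPl n ε).toFinset,
        (MvPolynomial.X (pfi hn pq.1) +
          MvPolynomial.C (-(v ^ (pq.2 + 1 - pq.1))) * MvPolynomial.X (pfi hn pq.2)) := by
    apply Finset.prod_congr rfl
    intro pq hpq
    obtain ⟨hlt, hp1, hq2, -, -⟩ := MP_mem hn (List.mem_toFinset.mp hpq)
    rw [xv_eq hn hp1 (by omega), xv_eq hn (by omega) hq2, map_neg, neg_mul,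
      ← sub_eq_add_neg]
  have e2 : ∏ u ∈ (MUl n ε).toFinset, xv n u
      = ∏ u ∈ (MUl n ε).toFinset, MvPolynomial.X (pfi hn u) := by
    apply Finset.prod_congr rfl
    intro u hu
    obtain ⟨h1, h2, -⟩ := MU_mem hn (List.mem_toFinset.mp hu)
    rw [xv_eq hn h1 h2]
  rw [e1, e2, Finset.prod_add, Finset.mul_sum, Finset.sum_mul]
  apply Finset.sum_congr rfl
  intro T hT
  rw [Finset.mem_powerset] at hT
  rw [Finset.prod_mul_distrib, ← map_prod]
  rw [cTf, map_mul]
  have hmS : mS (STf hn ε T) =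
      ((∏ pq ∈ T, MvPolynomial.X (pfi hn pq.1)) *
        (∏ pq ∈ (MPl n ε).toFinset \ T, MvPolynomial.X (pfi hn pq.2))) *
      (∏ u ∈ (MUl n ε).toFinset, MvPolynomial.X (pfi hn u)) := by
    rw [mS, STf, Finset.prod_union (STf_disj2 hn ε hT), Finset.prod_union (STf_disj1 hn ε hT)]
    rw [Finset.prod_image (fst_injOn hn ε hT),
      Finset.prod_image (snd_injOn hn ε (Finset.sdiff_subset)),
      Finset.prod_image (u_injOn hn ε)]
  rw [hmS]
  ring

lemma STf_card {n : ℕ} (hn : 0 < n) (ε : Fin n → Bool) {T : Finset (ℕ × ℕ)}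
    (hT : T ⊆ (MPl n ε).toFinset) : (STf hn ε T).card = (Mi ε).card := by
  classical
  rw [STf, Finset.card_union_of_disjoint (STf_disj2 hn ε hT),
    Finset.card_union_of_disjoint (STf_disj1 hn ε hT)]
  rw [Finset.card_image_of_injOn (fun x hx y hy h =>
    fst_injOn hn ε hT x (Finset.mem_coe.mp hx) y (Finset.mem_coe.mp hy) h)]
  rw [Finset.card_image_of_injOn (fun x hx y hy h =>
    snd_injOn hn ε Finset.sdiff_subset x (Finset.mem_coe.mp hx) y (Finset.mem_coe.mp hy) h)]
  rw [Finset.card_image_of_injOn (fun x hx y hy h =>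
    u_injOn hn ε x (Finset.mem_coe.mp hx) y (Finset.mem_coe.mp hy) h)]
  rw [add_comm T.card, Finset.card_sdiff_add_card_eq_card hT]
  rw [List.toFinset_card_of_nodup (MP_nodup n ε), List.toFinset_card_of_nodup (MU_nodup n ε)]
  exact length_MP_MU hn ε

lemma STf_top {n : ℕ} (hn : 0 < n) (ε : Fin n → Bool) :
    STf hn ε (MPl n ε).toFinset = Mi ε := by
  classical
  ext t
  rw [STf, Finset.sdiff_self, Finset.image_empty, Finset.union_empty]
  rw [Finset.mem_union, Finset.mem_image, Finset.mem_image]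
  constructor
  · rintro (⟨pq, hpq, rfl⟩ | ⟨u, hu, rfl⟩)
    · have := MP_fst_mem hn (List.mem_toFinset.mp hpq)
      rw [Mi, Finset.mem_filter]
      exact ⟨Finset.mem_univ _, this.2.2⟩
    · have := MU_mem hn (List.mem_toFinset.mp hu)
      rw [Mi, Finset.mem_filter]
      exact ⟨Finset.mem_univ _, this.2.2⟩
  · intro ht
    rcases Mi_surj hn ht with h | h
    · left
      rw [List.mem_map] at h
      obtain ⟨pq, hpq, he⟩ := h
      exact ⟨pq, List.mem_toFinset.mpr hpq, by rw [he, pfi_succ]⟩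
    · right
      exact ⟨(t : ℕ) + 1, List.mem_toFinset.mpr h, pfi_succ hn t⟩

lemma STf_eq_Mi {n : ℕ} (hn : 0 < n) (ε : Fin n → Bool) {T : Finset (ℕ × ℕ)}
    (hT : T ⊆ (MPl n ε).toFinset) (h : STf hn ε T = Mi ε) : T = (MPl n ε).toFinset := by
  classical
  by_contra hne
  have hnonempty : ((MPl n ε).toFinset \ T).Nonempty := by
    rw [Finset.sdiff_nonempty]
    intro hsub
    exact hne (Finset.Subset.antisymm hT hsub)
  obtain ⟨pq, hpq⟩ := hnonempty
  have hmem : pfi hn pq.2 ∈ STf hn ε T := by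
    rw [STf]
    exact Finset.mem_union_left _ (Finset.mem_union_right _
      (Finset.mem_image_of_mem _ hpq))
  rw [h, Mi, Finset.mem_filter] at hmem
  have := MP_mem hn (List.mem_toFinset.mp (Finset.mem_sdiff.mp hpq).1)
  rw [hmem.2] at this
  simp at this

lemma Wt_STf {n : ℕ} (hn : 0 < n) (ε : Fin n → Bool) {T : Finset (ℕ × ℕ)}
    (hT : T ⊆ (MPl n ε).toFinset) :
    Wt (STf hn ε T) = ((∑ pq ∈ T, (pq.1 - 1)) +
      ∑ pq ∈ (MPl n ε).toFinset \ T, (pq.2 - 1)) + ∑ u ∈ (MUl n ε).toFinset, (u - 1) := by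
  classical
  rw [Wt, STf, Finset.sum_union (STf_disj2 hn ε hT), Finset.sum_union (STf_disj1 hn ε hT)]
  congr 1
  · congr 1
    · rw [Finset.sum_image (fst_injOn hn ε hT)]
      apply Finset.sum_congr rfl
      intro pq hpq
      have := MP_fst_mem hn (List.mem_toFinset.mp (hT hpq))
      rw [pfi_val hn this.1 this.2.1]
    · rw [Finset.sum_image (snd_injOn hn ε Finset.sdiff_subset)]
      apply Finset.sum_congr rfl
      intro pq hpq
      have := MP_mem hn (List.mem_toFinset.mp (Finset.mem_sdiff.mp hpq).1)
      rw [pfi_val hn (by omega) this.2.2.1]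
  · rw [Finset.sum_image (u_injOn hn ε)]
    apply Finset.sum_congr rfl
    intro u hu
    have := MU_mem hn (List.mem_toFinset.mp hu)
    rw [pfi_val hn this.1 this.2.1]

lemma Wt_lt_STf {n : ℕ} (hn : 0 < n) (ε : Fin n → Bool) {T : Finset (ℕ × ℕ)}
    (hT : T ⊆ (MPl n ε).toFinset) (hne : T ≠ (MPl n ε).toFinset) :
    Wt (Mi ε) < Wt (STf hn ε T) := by
  classical
  have htop : Wt (Mi ε) = (∑ pq ∈ (MPl n ε).toFinset, (pq.1 - 1)) +
      ∑ u ∈ (MUl n ε).toFinset, (u - 1) := by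
    rw [← STf_top hn ε, Wt_STf hn ε (Finset.Subset.refl _), Finset.sdiff_self,
      Finset.sum_empty, add_zero]
  rw [htop, Wt_STf hn ε hT]
  have hsplit : ∑ pq ∈ (MPl n ε).toFinset, (pq.1 - 1)
      = (∑ pq ∈ (MPl n ε).toFinset \ T, (pq.1 - 1)) + ∑ pq ∈ T, (pq.1 - 1) :=
    (Finset.sum_sdiff hT).symm
  rw [hsplit]
  have hnonempty : ((MPl n ε).toFinset \ T).Nonempty := by
    rw [Finset.sdiff_nonempty]
    intro hsub
    exact hne (Finset.Subset.antisymm hT hsub)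
  have hlt : ∑ pq ∈ (MPl n ε).toFinset \ T, (pq.1 - 1)
      < ∑ pq ∈ (MPl n ε).toFinset \ T, (pq.2 - 1) := by
    apply Finset.sum_lt_sum_of_nonempty hnonempty
    intro pq hpq
    have := MP_mem hn (List.mem_toFinset.mp (Finset.mem_sdiff.mp hpq).1)
    omega
  omega

lemma cTf_top {n : ℕ} (ε : Fin n → Bool) :
    cTf ε (MPl n ε).toFinset = v⁻¹ ^ dstat ε := by
  classical
  rw [cTf, Finset.sdiff_self, Finset.prod_empty, mul_one]

lemma Qkey {n : ℕ} (hn : 0 < n) (ε : Fin n → Bool) :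
    ∃ c : Finset (Fin n) → F,
      Qpoly n ε = (∑ S : Finset (Fin n), MvPolynomial.C (c S) * mS S) ∧
      (∀ S, c S ≠ 0 → S.card = (Mi ε).card ∧ (S = Mi ε ∨ Wt (Mi ε) < Wt S)) ∧
      c (Mi ε) = v⁻¹ ^ dstat ε := by
  classical
  refine ⟨fun S => ∑ T ∈ (MPl n ε).toFinset.powerset.filter (fun T => STf hn ε T = S),
    cTf ε T, ?_, ?_, ?_⟩
  · rw [Qexpand hn ε, ← Finset.sum_fiberwise ((MPl n ε).toFinset.powerset)
      (fun T => STf hn ε T) (fun T => MvPolynomial.C (cTf ε T) * mS (STf hn ε T))]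
    apply Finset.sum_congr rfl
    intro S _
    rw [map_sum, Finset.sum_mul]
    apply Finset.sum_congr rfl
    intro T hT
    rw [Finset.mem_filter] at hT
    rw [hT.2]
  · intro S hc
    replace hc : (∑ T ∈ (MPl n ε).toFinset.powerset.filter (fun T => STf hn ε T = S),
      cTf ε T) ≠ 0 := hc
    have hne : ((MPl n ε).toFinset.powerset.filter (fun T => STf hn ε T = S)).Nonempty := by
      by_contra hemp
      rw [Finset.not_nonempty_iff_eq_empty] at hemp
      rw [hemp, Finset.sum_empty] at hc
      exact hc rfl
    obtain ⟨T, hT⟩ := hne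
    rw [Finset.mem_filter, Finset.mem_powerset] at hT
    obtain ⟨hsub, hST⟩ := hT
    subst hST
    refine ⟨STf_card hn ε hsub, ?_⟩
    by_cases heq : T = (MPl n ε).toFinset
    · left; rw [heq]; exact STf_top hn ε
    · right; exact Wt_lt_STf hn ε hsub heq
  · show (∑ T ∈ (MPl n ε).toFinset.powerset.filter (fun T => STf hn ε T = Mi ε),
      cTf ε T) = v⁻¹ ^ dstat ε
    have hfilter : (MPl n ε).toFinset.powerset.filter (fun T => STf hn ε T = Mi ε)
        = {(MPl n ε).toFinset} := by
      ext T
      rw [Finset.mem_filter, Finset.mem_powerset, Finset.mem_singleton]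
      constructor
      · rintro ⟨h1, h2⟩
        exact STf_eq_Mi hn ε h1 h2
      · rintro rfl
        exact ⟨Finset.Subset.refl _, STf_top hn ε⟩
    rw [hfilter, Finset.sum_singleton, cTf_top]

lemma Mi_card {n k : ℕ} (ε : Stt n k) : (Mi ε.1).card = n - k := by
  classical
  have h := Finset.card_filter_add_card_filter_not
    (s := (Finset.univ : Finset (Fin n))) (p := fun t => ε.1 t = true)
  have he : (Finset.univ.filter fun t => ¬ ε.1 t = true) = Mi ε.1 := by
    apply Finset.filter_congr
    intro t _
    simp [Bool.not_eq_true]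
  rw [he, ε.2, Finset.card_univ, Fintype.card_fin] at h
  omega

lemma Mi_inj {n : ℕ} {ε δ : Fin n → Bool} (h : Mi ε = Mi δ) : ε = δ := by
  funext t
  have h1 : t ∈ Mi ε ↔ t ∈ Mi δ := by rw [h]
  simp only [Mi, Finset.mem_filter, Finset.mem_univ, true_and] at h1
  cases hε : ε t <;> cases hδ : δ t <;> simp_all

lemma vd_ne_zero (d : ℕ) : (v⁻¹ ^ d : F) ≠ 0 :=
  pow_ne_zero _ (inv_ne_zero RatFunc.X_ne_zero)

/-- The polynomials Q_ε, ε ∈ E, form a ℚ(v)-basis of P(k,n). -/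
theorem Qpoly_basis (n k : ℕ) (hk : 0 < k) (hkn : k < n) :
    LinearIndependent F (fun ε : Stt n k => Qpoly n ε.1) ∧
    (Submodule.span F (Set.range fun ε : Stt n k => Qpoly n ε.1) :
      Set (MvPolynomial (Fin n) F)) = Pspace n k := by
  classical
  have hn : 0 < n := by omega
  choose c hrep hsupp hlead using fun ε : Fin n → Bool => Qkey hn ε
  have hcoeff : ∀ (ε : Fin n → Bool) (S₀ : Finset (Fin n)),
      MvPolynomial.coeff (eS S₀) (Qpoly n ε) = c ε S₀ := by
    intro ε S₀
    rw [hrep ε, MvPolynomial.coeff_sum]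
    have hterm : ∀ S : Finset (Fin n),
        MvPolynomial.coeff (eS S₀) (MvPolynomial.C (c ε S) * mS S)
          = if S = S₀ then c ε S else 0 := by
      intro S
      rw [mS_eq, MvPolynomial.C_mul_monomial, mul_one, MvPolynomial.coeff_monomial]
      by_cases h : S = S₀
      · subst h; simp
      · rw [if_neg (fun he => h (eS_inj he)), if_neg h]
    rw [Finset.sum_congr rfl (fun S _ => hterm S), Finset.sum_ite_eq' Finset.univ S₀,
      if_pos (Finset.mem_univ _)]
  refine ⟨?_, ?_⟩
  · rw [Fintype.linearIndependent_iff]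
    intro g hg
    by_contra hne
    push_neg at hne
    obtain ⟨i₀, hi₀⟩ := hne
    set s : Finset (Stt n k) := Finset.univ.filter (fun ε => g ε ≠ 0) with hs_def
    have hsne : s.Nonempty := ⟨i₀, by simp [hs_def, hi₀]⟩
    obtain ⟨ε₀, hε₀s, hmin⟩ := Finset.exists_min_image s (fun ε => Wt (Mi ε.1)) hsne
    have h0 := congrArg (MvPolynomial.coeff (eS (Mi ε₀.1))) hg
    rw [MvPolynomial.coeff_sum, MvPolynomial.coeff_zero] at h0
    have hterm : ∀ ε : Stt n k,
        MvPolynomial.coeff (eS (Mi ε₀.1)) (g ε • Qpoly n ε.1)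
          = g ε * c ε.1 (Mi ε₀.1) := by
      intro ε
      rw [MvPolynomial.coeff_smul, hcoeff]
      rfl
    rw [Finset.sum_congr rfl (fun ε _ => hterm ε)] at h0
    rw [Finset.sum_eq_single ε₀ ?side1 ?side2] at h0
    · rw [hlead ε₀.1] at h0
      rcases mul_eq_zero.mp h0 with h | h
      · rw [hs_def] at hε₀s
        simp only [Finset.mem_filter] at hε₀s
        exact hε₀s.2 h
      · exact vd_ne_zero _ h
    case side1 =>
      intro ε _ hεne
      by_cases hgε : g ε = 0
      · rw [hgε, zero_mul]
      · by_cases hcε : c ε.1 (Mi ε₀.1) = 0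
        · rw [hcε, mul_zero]
        · exfalso
          obtain ⟨-, hor⟩ := hsupp ε.1 (Mi ε₀.1) hcε
          rcases hor with heq | hlt
          · exact hεne (Subtype.ext (Mi_inj heq.symm))
          · have hεs : ε ∈ s := by simp [hs_def, hgε]
            have := hmin ε hεs
            omega
    case side2 =>
      intro h
      exact absurd (Finset.mem_univ ε₀) h
  · have hspanle : Submodule.span F (Set.range fun ε : Stt n k => Qpoly n ε.1)
        ≤ Psub n k := by
      rw [Submodule.span_le]
      rintro _ ⟨ε, rfl⟩
      show Qpoly n ε.1 ∈ Psub n k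
      rw [hrep ε.1]
      apply Submodule.sum_mem
      intro S _
      by_cases hcS : c ε.1 S = 0
      · rw [hcS, map_zero, zero_mul]
        exact Submodule.zero_mem _
      · exact mono_mem_Psub _ ((hsupp ε.1 S hcS).1.trans (Mi_card ε))
    have hmono : ∀ S : Finset (Fin n), S.card = n - k →
        mS S ∈ Submodule.span F (Set.range fun ε : Stt n k => Qpoly n ε.1) := by
      suffices h : ∀ j, ∀ S : Finset (Fin n), S.card = n - k →
          Wt (Finset.univ : Finset (Fin n)) - Wt S ≤ j →
          mS S ∈ Submodule.span F (Set.range fun ε : Stt n k => Qpoly n ε.1) by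
        intro S hS
        exact h _ S hS le_rfl
      intro j
      induction j using Nat.strong_induction_on with
      | _ j ih =>
        intro S hS hj
        set ε : Fin n → Bool := fun t => decide (t ∉ S) with hε_def
        have hMiS : Mi ε = S := by
          ext t
          simp [Mi, hε_def]
        have hcard : (Finset.univ.filter fun t => ε t = true).card = k := by
          have hfil : (Finset.univ.filter fun t => ε t = true) = Sᶜ := by
            ext t
            simp [hε_def, Finset.mem_compl]
          rw [hfil, Finset.card_compl, hS, Fintype.card_fin]
          omega
        have hqmem : Qpoly n ε ∈ Submodule.span F
            (Set.range fun ε : Stt n k => Qpoly n ε.1) :=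
          Submodule.subset_span ⟨(⟨ε, hcard⟩ : Stt n k), rfl⟩
        have hkey : MvPolynomial.C (c ε S) * mS S
            = Qpoly n ε - ∑ S' ∈ Finset.univ.erase S, MvPolynomial.C (c ε S') * mS S' := by
          rw [hrep ε, ← Finset.sum_erase_add Finset.univ _ (Finset.mem_univ S)]
          ring
        have hsum_mem : (∑ S' ∈ Finset.univ.erase S, MvPolynomial.C (c ε S') * mS S')
            ∈ Submodule.span F (Set.range fun ε : Stt n k => Qpoly n ε.1) := by
          apply Submodule.sum_mem
          intro S' hS'
          by_cases hc' : c ε S' = 0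
          · rw [hc', map_zero, zero_mul]
            exact Submodule.zero_mem _
          · obtain ⟨hcard', hor⟩ := hsupp ε S' hc'
            rcases hor with heq | hlt
            · exact absurd (heq.trans hMiS) (Finset.mem_erase.mp hS').1
            · rw [hMiS] at hlt hcard'
              have hWle : Wt S' ≤ Wt (Finset.univ : Finset (Fin n)) :=
                Finset.sum_le_sum_of_subset (Finset.subset_univ S')
              have hjlt : Wt (Finset.univ : Finset (Fin n)) - Wt S' < j := by omega
              have hmem := ih _ hjlt S' (hcard'.trans hS) le_rfl
              rw [← MvPolynomial.smul_eq_C_mul]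
              exact Submodule.smul_mem _ _ hmem
        have hmem2 : MvPolynomial.C (c ε S) * mS S
            ∈ Submodule.span F (Set.range fun ε : Stt n k => Qpoly n ε.1) := by
          rw [hkey]
          exact Submodule.sub_mem _ hqmem hsum_mem
        have hc0 : c ε S ≠ 0 := by
          rw [← hMiS, hlead ε]
          exact vd_ne_zero _
        have hsm := Submodule.smul_mem _ (c ε S)⁻¹ hmem2
        have heq2 : (c ε S)⁻¹ • (MvPolynomial.C (c ε S) * mS S) = mS S := by
          rw [MvPolynomial.smul_eq_C_mul, ← mul_assoc, ← map_mul,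
            inv_mul_cancel₀ hc0, map_one, one_mul]
        rwa [heq2] at hsm
    have hle2 : Psub n k ≤ Submodule.span F (Set.range fun ε : Stt n k => Qpoly n ε.1) := by
      rintro f ⟨hhom, hdeg⟩
      rw [MvPolynomial.as_sum f]
      apply Submodule.sum_mem
      intro m hm
      have hm1 : ∀ t, m t ≤ 1 := fun t => MvPolynomial.degreeOf_le_iff.mp (hdeg t) m hm
      have hmeq : m = eS m.support := by
        ext t
        rw [eS_apply]
        by_cases h : t ∈ m.support
        · rw [if_pos h]
          have := Finsupp.mem_support_iff.mp h
          have := hm1 t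
          omega
        · rw [if_neg h]
          exact Finsupp.notMem_support_iff.mp h
      have hcard : m.support.card = n - k := by
        have hw := hhom (MvPolynomial.mem_support_iff.mp hm)
        have hdegm : Finsupp.degree m = n - k := by
          rw [Finsupp.degree_eq_weight_one]
          exact hw
        rw [Finsupp.degree_apply] at hdegm
        have : ∑ t ∈ m.support, m t = m.support.card := by
          rw [Finset.card_eq_sum_ones]
          apply Finset.sum_congr rfl
          intro t ht
          have := Finsupp.mem_support_iff.mp ht
          have := hm1 t
          omega
        omega
      have hmono_eq : MvPolynomial.monomial m (MvPolynomial.coeff m f)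
          = MvPolynomial.coeff m f • mS m.support := by
        rw [MvPolynomial.smul_eq_C_mul, mS_eq, MvPolynomial.C_mul_monomial, mul_one, ← hmeq]
      rw [hmono_eq]
      exact Submodule.smul_mem _ _ (hmono m.support hcard)
    have hfinal : Submodule.span F (Set.range fun ε : Stt n k => Qpoly n ε.1) = Psub n k :=
      le_antisymm hspanle hle2
    rw [hfinal]
    rfl

end
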